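/- Let 𝔄 be a unital C*-algebra with C*-norm ‖·‖, 𝒜 a self-adjoint linear subspace of 𝔄 containing 1, and L : 𝒜 → [0,∞) a seminorm such that L(a) = 0 if and only if a ∈ ℂ·1. Suppose the image of { a ∈ 𝒜 : L(a) ≤ 1 } in the quotient normed space 𝔄/ℂ·1 (with the quotient norm of ‖·‖) is totally bounded. Then the topology induced by ρ_L on S(𝔄) is weaker than the weak* topology: for every state ν and every ε > 0 there is a weak* open set U containing ν such that every state ν' ∈ U satisfies ρ_L(ν',ν) < ε. -/

import Mathlib

open scoped ENNReal

noncomputable section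

variable {A : Type*} [CStarAlgebra A]

/-- A state on a unital C*-algebra `A`, viewed as an element of the weak* dual: a continuous
linear functional sending the unit to `1` and taking nonnegative real values on positive
elements `star a * a`. -/
def IsState (φ : WeakDual ℂ A) : Prop :=
  φ 1 = 1 ∧ ∀ a : A, 0 ≤ (φ (star a * a)).re ∧ (φ (star a * a)).im = 0

/-- The semi metric `ρ_L` on the state space of `A` associated with a subset `𝒜 ⊆ A` and a
function `L : A → ℝ`: `ρ_L(μ, ν) = sup { |μ a - ν a| : a ∈ 𝒜, L a ≤ 1 }`, valued in
`[0, ∞]`. -/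
def rhoL (𝒜 : Set A) (L : A → ℝ) (μ ν : WeakDual ℂ A) : ℝ≥0∞ :=
  ⨆ a ∈ {a : A | a ∈ 𝒜 ∧ L a ≤ 1}, (‖μ a - ν a‖₊ : ℝ≥0∞)

section aux
variable [PartialOrder A] [StarOrderedRing A]

lemma IsState.apply_nonneg {φ : WeakDual ℂ A} (hφ : IsState φ) {x : A} (hx : 0 ≤ x) :
    0 ≤ (φ x).re ∧ (φ x).im = 0 := by
  have hmem := StarOrderedRing.nonneg_iff.mp hx
  clear hx
  induction hmem using AddSubmonoid.closure_induction with
  | mem y hy => obtain ⟨s, rfl⟩ := hy; exact hφ.2 s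
  | zero => simp
  | add y z _ _ hy hz =>
      simp only [map_add, Complex.add_re, Complex.add_im]
      exact ⟨add_nonneg hy.1 hz.1, by rw [hy.2, hz.2, add_zero]⟩

lemma IsState.norm_apply_le_of_sa {φ : WeakDual ℂ A} (hφ : IsState φ) {h : A}
    (hh : IsSelfAdjoint h) : ‖φ h‖ ≤ ‖h‖ := by
  have key : ∀ r : ℝ, φ (algebraMap ℝ A r) = (r : ℂ) := by
    intro r
    rw [Algebra.algebraMap_eq_smul_one, ← Complex.coe_smul, map_smul, hφ.1, smul_eq_mul, mul_one]
  have e1 : (0:A) ≤ algebraMap ℝ A ‖h‖ - h := sub_nonneg.mpr hh.le_algebraMap_norm_self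
  have e2 : (0:A) ≤ algebraMap ℝ A ‖h‖ + h := by
    have h' := sub_nonneg.mpr hh.neg_algebraMap_norm_le_self
    rwa [sub_neg_eq_add, add_comm] at h'
  have h1 := hφ.apply_nonneg e1
  have h2 := hφ.apply_nonneg e2
  rw [map_sub, key] at h1
  rw [map_add, key] at h2
  simp only [Complex.sub_re, Complex.sub_im, Complex.add_re, Complex.add_im, Complex.ofReal_re,
    Complex.ofReal_im, zero_sub, neg_eq_zero, zero_add] at h1 h2
  have him : (φ h).im = 0 := h1.2
  calc ‖φ h‖ ≤ |(φ h).re| + |(φ h).im| := Complex.norm_le_abs_re_add_abs_im _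
    _ ≤ ‖h‖ := by
        rw [him, abs_zero, add_zero]
        exact abs_le.mpr ⟨by linarith [h2.1], by linarith [h1.1]⟩

lemma IsState.norm_apply_le {φ : WeakDual ℂ A} (hφ : IsState φ) (a : A) :
    ‖φ a‖ ≤ 2 * ‖a‖ := by
  set h := a + star a with hh_def
  set k := Complex.I • (star a - a) with hk_def
  have hsa1 : IsSelfAdjoint h := by
    rw [IsSelfAdjoint, hh_def, star_add, star_star, add_comm]
  have hsa2 : IsSelfAdjoint k := by
    rw [IsSelfAdjoint, hk_def, star_smul, star_sub, star_star, Complex.star_def, Complex.conj_I,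
      neg_smul, ← smul_neg, neg_sub]
  have hk : Complex.I • k = a - star a := by
    rw [hk_def, smul_smul, Complex.I_mul_I, neg_one_smul, neg_sub]
  have h2a : (2:ℂ) • a = h + Complex.I • k := by
    rw [hk, hh_def]
    module
  have hφ2 : (2:ℂ) • φ a = φ h + Complex.I • φ k := by
    rw [← map_smul, h2a, map_add, map_smul]
  have hn : 2 * ‖φ a‖ = ‖φ h + Complex.I • φ k‖ := by
    rw [← hφ2, norm_smul]
    norm_num
  have bh : ‖φ h‖ ≤ 2 * ‖a‖ := by
    refine (hφ.norm_apply_le_of_sa hsa1).trans ?_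
    calc ‖a + star a‖ ≤ ‖a‖ + ‖star a‖ := norm_add_le _ _
      _ = 2 * ‖a‖ := by rw [norm_star]; ring
  have bk : ‖φ k‖ ≤ 2 * ‖a‖ := by
    refine (hφ.norm_apply_le_of_sa hsa2).trans ?_
    rw [hk_def, norm_smul, Complex.norm_I, one_mul]
    calc ‖star a - a‖ ≤ ‖star a‖ + ‖a‖ := norm_sub_le _ _
      _ = 2 * ‖a‖ := by rw [norm_star]; ring
  have htri : ‖φ h + Complex.I • φ k‖ ≤ ‖φ h‖ + ‖φ k‖ := by
    refine (norm_add_le _ _).trans ?_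
    rw [norm_smul, Complex.norm_I, one_mul]
  linarith

end aux

/-- Rieffel's criterion.  Let `A` be a unital C*-algebra, `𝒜` a self-adjoint
linear subspace of `A` containing `1`, and `L` a seminorm on `𝒜` with `L a = 0` iff
`a ∈ ℂ·1`.  If the image of `{a ∈ 𝒜 : L a ≤ 1}` in the quotient normed space `A / ℂ·1` is
totally bounded, then the topology induced by `ρ_L` on the state space is weaker than the
weak* topology. -/
theorem rhoL_topology_weaker_of_totallyBounded (𝒜 : Submodule ℂ A)
    (hstar : ∀ a ∈ 𝒜, star a ∈ 𝒜) (hone : (1 : A) ∈ 𝒜) (L : A → ℝ)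
    (hL_nonneg : ∀ a ∈ 𝒜, 0 ≤ L a)
    (hL_add : ∀ a ∈ 𝒜, ∀ b ∈ 𝒜, L (a + b) ≤ L a + L b)
    (hL_smul : ∀ (c : ℂ), ∀ a ∈ 𝒜, L (c • a) = ‖c‖ * L a)
    (hL_zero : ∀ a ∈ 𝒜, (L a = 0 ↔ ∃ c : ℂ, a = c • (1 : A)))
    (htb : TotallyBounded
      ((Submodule.span ℂ ({1} : Set A)).mkQ '' {a : A | a ∈ 𝒜 ∧ L a ≤ 1})) :
    ∀ ν : WeakDual ℂ A, IsState ν → ∀ ε : ℝ, 0 < ε →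
      ∃ U : Set (WeakDual ℂ A), IsOpen U ∧ ν ∈ U ∧
        ∀ ν' ∈ U, IsState ν' → rhoL (𝒜 : Set A) L ν' ν < ENNReal.ofReal ε := by
  intro ν hν ε hε
  set S := Submodule.span ℂ ({1} : Set A) with hS
  have hδ : (0:ℝ) < ε / 32 := by linarith
  obtain ⟨t, htfin, hcover⟩ := Metric.totallyBounded_iff.mp htb (ε / 32) hδ
  choose b hb using Submodule.mkQ_surjective S
  refine ⟨⋂ q ∈ t, {ν' : WeakDual ℂ A | ‖ν' (b q) - ν (b q)‖ < ε / 4}, ?_, ?_, ?_⟩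
  · refine htfin.isOpen_biInter fun q _ => ?_
    exact isOpen_lt (((WeakDual.eval_continuous (b q)).sub continuous_const).norm)
      continuous_const
  · refine Set.mem_iInter₂.mpr fun q _ => ?_
    simp only [Set.mem_setOf_eq, sub_self, norm_zero]
    linarith
  · intro ν' hU hν'
    letI := CStarAlgebra.spectralOrder A
    haveI := CStarAlgebra.spectralOrderedRing A
    have key : ∀ a, a ∈ 𝒜 → L a ≤ 1 → ‖ν' a - ν a‖ ≤ ε / 2 := by
      intro a ha hLa
      have hmem : S.mkQ a ∈ S.mkQ '' {a : A | a ∈ 𝒜 ∧ L a ≤ 1} := ⟨a, ⟨ha, hLa⟩, rfl⟩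
      obtain ⟨q, hqt, hball⟩ := Set.mem_iUnion₂.mp (hcover hmem)
      rw [Metric.mem_ball, dist_eq_norm] at hball
      have heq : S.mkQ a - q = S.mkQ (a - b q) := by rw [map_sub, hb q]
      rw [heq] at hball
      obtain ⟨m, hm_eq, hm_norm⟩ := Submodule.Quotient.norm_mk_lt (S.mkQ (a - b q)) hδ
      have hm : ‖m‖ < ε / 16 := by
        rw [Submodule.mkQ_apply] at hball
        calc ‖m‖ < ‖(Submodule.Quotient.mk (a - b q) : A ⧸ S)‖ + ε / 32 := by
              rw [Submodule.mkQ_apply] at hm_eq; simpa using hm_norm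
          _ < ε / 32 + ε / 32 := by linarith
          _ = ε / 16 := by ring
      have hsub : m - (a - b q) ∈ S := by
        rw [← Submodule.Quotient.eq S]
        rw [Submodule.mkQ_apply] at hm_eq
        exact hm_eq
      have hsub' : a - b q - m ∈ S := by
        have := S.neg_mem hsub
        rwa [neg_sub] at this
      obtain ⟨c, hc⟩ := Submodule.mem_span_singleton.mp hsub'
      have hdecomp : a = b q + m + c • (1 : A) := by
        rw [hc]; abel
      have hν'c : ν' (c • (1 : A)) = c := by
        rw [map_smul, hν'.1, smul_eq_mul, mul_one]
      have hνc : ν (c • (1 : A)) = c := by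
        rw [map_smul, hν.1, smul_eq_mul, mul_one]
      have hsplit : ν' a - ν a = (ν' (b q) - ν (b q)) + (ν' m - ν m) := by
        conv_lhs => rw [hdecomp]
        simp only [map_add, hν'c, hνc]
        ring
      have hUq : ‖ν' (b q) - ν (b q)‖ < ε / 4 := Set.mem_iInter₂.mp hU q hqt
      have hm1 : ‖ν' m‖ ≤ 2 * ‖m‖ := hν'.norm_apply_le m
      have hm2 : ‖ν m‖ ≤ 2 * ‖m‖ := hν.norm_apply_le m
      calc ‖ν' a - ν a‖ = ‖(ν' (b q) - ν (b q)) + (ν' m - ν m)‖ := by rw [hsplit]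
        _ ≤ ‖ν' (b q) - ν (b q)‖ + (‖ν' m‖ + ‖ν m‖) :=
            (norm_add_le _ _).trans (by gcongr; exact norm_sub_le _ _)
        _ ≤ ε / 4 + (2 * ‖m‖ + 2 * ‖m‖) := by gcongr <;> linarith
        _ ≤ ε / 2 := by linarith
    have hle : rhoL (𝒜 : Set A) L ν' ν ≤ ENNReal.ofReal (ε / 2) := by
      refine iSup₂_le fun a ha => ?_
      have := ENNReal.ofReal_le_ofReal (key a ha.1 ha.2)
      rw [ofReal_norm] at this
      exact this
    exact lt_of_le_of_lt hle ((ENNReal.ofReal_lt_ofReal_iff hε).mpr (by linarith))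

end
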